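/- For every integer n ≥ 1 and every ε with 0 < ε < 1, the function f : ℂ^n → ℝ given by f(z) = 1 / ( |∏_{i=1}^n ln|z_i|| · ∏_{i=1}^n |z_i|^2 ) is NOT integrable (with respect to Lebesgue measure on ℂ^n) on the ball { z ∈ ℂ^n : ‖z‖ < ε }. -/

import Mathlib

open MeasureTheory ENNReal Real



noncomputable def G1 : ℂ → ℝ≥0∞ := fun w =>
  ENNReal.ofReal (1 / (|Real.log (‖w‖)| * ‖w‖ ^ 2))

lemma G1_measurable : Measurable G1 := by
  unfold G1
  have h1 : Measurable fun w : ℂ => Real.log (‖w‖) :=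
    Real.measurable_log.comp continuous_norm.measurable
  have h2 : Measurable fun w : ℂ => |Real.log (‖w‖)| * ‖w‖ ^ 2 :=
    h1.abs.mul ((continuous_norm.measurable).pow_const 2)
  exact ENNReal.measurable_ofReal.comp ((measurable_const.div h2))


set_option maxHeartbeats 1000000 in
lemma core (ε : ℝ) (hε0 : 0 < ε) (hε1 : ε < 1) :
    ∫⁻ w in Metric.ball (0:ℂ) ε, G1 w = ⊤ := by
  set K : ℕ := Nat.floor (Real.log ε⁻¹) + 1 with hKdef
  have hK1 : 1 ≤ K := Nat.le_add_left 1 _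
  have hKgt : Real.log ε⁻¹ < (K : ℝ) := by
    have := Nat.lt_floor_add_one (Real.log ε⁻¹)
    push_cast [hKdef]
    exact_mod_cast this
  have hKε : Real.exp (-(K : ℝ)) < ε := by
    have h1 : Real.exp (-(K : ℝ)) < Real.exp (Real.log ε) := by
      apply Real.exp_lt_exp.2
      rw [Real.log_inv] at hKgt
      linarith
    rwa [Real.exp_log hε0] at h1
  clear_value K
  clear hKdef hKgt
  -- radii and annuli
  set r : ℕ → ℝ := fun m => Real.exp (-((K + m : ℕ) : ℝ)) with hrdef
  have hrpos : ∀ m, 0 < r m := fun m => Real.exp_pos _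
  have hrmono : ∀ {a b : ℕ}, a ≤ b → r b ≤ r a := by
    intro a b hab
    apply Real.exp_le_exp.2
    simp only [neg_le_neg_iff]
    exact_mod_cast Nat.add_le_add_left hab K
  have hrε : ∀ m, r m < ε := fun m =>
    lt_of_le_of_lt (by
      apply Real.exp_le_exp.2
      simp only [neg_le_neg_iff]
      exact_mod_cast Nat.le_add_right K m) hKε
  set A : ℕ → Set ℂ := fun k => Metric.ball 0 (r k) \ Metric.ball 0 (r (k + 1)) with hAdef
  have hAmeas : ∀ k, MeasurableSet (A k) :=
    fun k => measurableSet_ball.diff measurableSet_ball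
  have hAsub : ∀ k, A k ⊆ Metric.ball (0:ℂ) ε := fun k =>
    Set.diff_subset.trans (Metric.ball_subset_ball (hrε k).le)
  have hAdisj : Pairwise (Function.onFun Disjoint A) := by
    have key : ∀ {k l : ℕ}, k < l → Disjoint (A k) (A l) := by
      intro k l hkl
      rw [Set.disjoint_left]
      intro w hwk hwl
      exact hwk.2 (Metric.ball_subset_ball (hrmono hkl) hwl.1)
    intro k l hkl
    rcases lt_or_gt_of_ne hkl with h | h
    · exact key h
    · exact (key h).symm
  -- membership facts
  have hmem : ∀ k w, w ∈ A k → r (k+1) ≤ ‖w‖ ∧ ‖w‖ < r k := by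
    intro k w hw
    obtain ⟨hw1, hw2⟩ := hw
    rw [Metric.mem_ball, Complex.dist_eq, sub_zero] at hw1
    rw [Metric.mem_ball, Complex.dist_eq, sub_zero, not_lt] at hw2
    exact ⟨hw2, hw1⟩
  -- pointwise lower bound on each annulus
  have hbound : ∀ k w, w ∈ A k →
      ENNReal.ofReal (Real.exp (2 * ((K + k : ℕ) : ℝ)) / (((K + k : ℕ) : ℝ) + 1)) ≤ G1 w := by
    intro k w hw
    obtain ⟨hw2, hw1⟩ := hmem k w hw
    set M : ℝ := ((K + k : ℕ) : ℝ) with hM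
    have hM1 : 1 ≤ M := by
      rw [hM]; exact_mod_cast Nat.le_add_right 1 0 |>.trans (Nat.add_le_add hK1 (Nat.zero_le k))
    have hrk : r k = Real.exp (-M) := rfl
    have hcast : ((K + (k+1) : ℕ) : ℝ) = M + 1 := by rw [hM]; push_cast; ring
    have hrk1 : r (k+1) = Real.exp (-(M+1)) := by
      show Real.exp (-((K + (k+1) : ℕ) : ℝ)) = _
      rw [hcast]
    rw [hrk] at hw1; rw [hrk1] at hw2
    have habs_pos : 0 < ‖w‖ := lt_of_lt_of_le (Real.exp_pos _) hw2
    have hlog_lt : Real.log (‖w‖) < -M := by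
      have := Real.log_lt_log habs_pos hw1
      rwa [Real.log_exp] at this
    have hlog_ge : -(M+1) ≤ Real.log (‖w‖) := by
      have := Real.log_le_log (Real.exp_pos _) hw2
      rwa [Real.log_exp] at this
    have hlog_neg : Real.log (‖w‖) < 0 := lt_of_lt_of_le hlog_lt (by linarith)
    have habslog : |Real.log (‖w‖)| ≤ M + 1 := by
      rw [abs_of_neg hlog_neg]; linarith
    have habslog_pos : 0 < |Real.log (‖w‖)| := abs_pos.2 (ne_of_lt hlog_neg)
    have hsq : ‖w‖ ^ 2 < Real.exp (-M) ^ 2 := by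
      apply pow_lt_pow_left₀ hw1 (norm_nonneg w)
      norm_num
    have hD_pos : 0 < |Real.log (‖w‖)| * ‖w‖ ^ 2 :=
      mul_pos habslog_pos (pow_pos habs_pos 2)
    have hD_le : |Real.log (‖w‖)| * ‖w‖ ^ 2 ≤ (M + 1) * Real.exp (-M) ^ 2 := by
      apply mul_le_mul habslog hsq.le (by positivity) (by linarith)
    have h1 : 1 / ((M + 1) * Real.exp (-M) ^ 2) ≤
        1 / (|Real.log (‖w‖)| * ‖w‖ ^ 2) :=
      one_div_le_one_div_of_le hD_pos hD_le
    have h2 : Real.exp (2 * M) / (M + 1) = 1 / ((M + 1) * Real.exp (-M) ^ 2) := by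
      rw [Real.exp_neg]
      have h3 : Real.exp (2 * M) = Real.exp M ^ 2 := by
        rw [← Real.exp_nat_mul]; push_cast; ring_nf
      rw [h3]
      have := Real.exp_ne_zero M
      field_simp
    unfold G1
    apply ENNReal.ofReal_le_ofReal
    rw [h2]
    exact h1
  -- lower bound the integral over each annulus
  have hannulus : ∀ k,
      ENNReal.ofReal (Real.exp (2 * ((K + k : ℕ) : ℝ)) / (((K + k : ℕ) : ℝ) + 1)) * volume (A k)
        ≤ ∫⁻ w in A k, G1 w := by
    intro k
    rw [← setLIntegral_const (A k)]
    exact setLIntegral_mono' (hAmeas k) (fun w hw => hbound k w hw)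
  -- compute the volume of each annulus
  have hvol : ∀ k, volume (A k) = ENNReal.ofReal (π * (r k ^ 2 - r (k+1) ^ 2)) := by
    intro k
    rw [hAdef]
    rw [measure_diff (Metric.ball_subset_ball (hrmono (Nat.le_succ k)))
      measurableSet_ball.nullMeasurableSet measure_ball_lt_top.ne]
    rw [Complex.volume_ball, Complex.volume_ball]
    have hpi : (NNReal.pi : ℝ≥0∞) = ENNReal.ofReal π := by
      rw [← NNReal.coe_real_pi, ENNReal.ofReal_coe_nnreal]
    rw [hpi, ← ENNReal.ofReal_pow (hrpos k).le, ← ENNReal.ofReal_pow (hrpos (k+1)).le,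
      ← ENNReal.ofReal_mul (by positivity), ← ENNReal.ofReal_mul (by positivity),
      ← ENNReal.ofReal_sub _ (by positivity)]
    congr 1
    ring
  -- each annulus contributes at least c/(K+k+1)
  set c : ℝ := π * (1 - Real.exp (-1) ^ 2) with hcdef
  have hc_pos : 0 < c := by
    have : Real.exp (-1) < 1 := Real.exp_lt_one_iff.2 (by norm_num)
    have h0 : (0:ℝ) < Real.exp (-1) := Real.exp_pos _
    rw [hcdef]
    have : Real.exp (-1) ^ 2 < 1 := by nlinarith
    nlinarith [Real.pi_pos]
  have hterm : ∀ k, ENNReal.ofReal (c / (((K + k : ℕ) : ℝ) + 1)) ≤ ∫⁻ w in A k, G1 w := by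
    intro k
    refine le_trans (le_of_eq ?_) (hannulus k)
    rw [hvol k, ← ENNReal.ofReal_mul (by positivity)]
    congr 1
    set M : ℝ := ((K + k : ℕ) : ℝ) with hM
    have hMnn : 0 ≤ M := by rw [hM]; positivity
    have hrk : r k = Real.exp (-M) := rfl
    have hcast : ((K + (k+1) : ℕ) : ℝ) = M + 1 := by rw [hM]; push_cast; ring
    have hrk1 : r (k+1) = Real.exp (-(M+1)) := by
      show Real.exp (-((K + (k+1) : ℕ) : ℝ)) = _
      rw [hcast]
    rw [hrk, hrk1, hcdef]
    have e1 : Real.exp (-(M+1)) = Real.exp (-M) * Real.exp (-1) := by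
      rw [← Real.exp_add]; ring_nf
    have e2 : Real.exp (2 * M) = Real.exp M ^ 2 := by
      rw [← Real.exp_nat_mul]; push_cast; ring_nf
    have e3 : Real.exp (-M) = (Real.exp M)⁻¹ := Real.exp_neg M
    rw [e1, e2, e3]
    have h4 := Real.exp_ne_zero M
    have h5 : M + 1 ≠ 0 := by linarith
    field_simp
  -- sum diverges
  have hsum : (∑' k : ℕ, ENNReal.ofReal (c / (((K + k : ℕ) : ℝ) + 1))) = ⊤ := by
    have heq : ∀ k : ℕ, ENNReal.ofReal (c / (((K + k : ℕ) : ℝ) + 1)) =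
        ENNReal.ofReal c * ENNReal.ofReal ((((K + k : ℕ) : ℝ) + 1)⁻¹) := by
      intro k
      rw [← ENNReal.ofReal_mul hc_pos.le, div_eq_mul_inv]
    have htop : (∑' k : ℕ, ENNReal.ofReal ((((K + k : ℕ) : ℝ) + 1)⁻¹)) = ⊤ := by
      by_contra h
      have hsummable : Summable (fun k : ℕ => Real.toNNReal ((((K + k : ℕ) : ℝ) + 1)⁻¹)) := by
        apply ENNReal.tsum_coe_ne_top_iff_summable.1
        simpa only [ENNReal.ofReal] using h
      have hreal : Summable (fun k : ℕ => (((K + k : ℕ) : ℝ) + 1)⁻¹) := by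
        have := NNReal.summable_coe.2 hsummable
        refine this.congr fun k => ?_
        rw [Real.coe_toNNReal _ (by positivity)]
      have hshift : Summable (fun k : ℕ => ((k + (K + 1) : ℕ) : ℝ)⁻¹) := by
        refine hreal.congr fun k => ?_
        push_cast
        ring_nf
      have := (summable_nat_add_iff (f := fun n : ℕ => ((n : ℝ))⁻¹) (K + 1)).1
        (by exact_mod_cast hshift)
      exact Real.not_summable_natCast_inv this
    simp_rw [heq]
    rw [ENNReal.tsum_mul_left, htop, ENNReal.mul_top (ENNReal.ofReal_pos.2 hc_pos).ne']
  -- conclude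
  have hchain : (∑' k : ℕ, ENNReal.ofReal (c / (((K + k : ℕ) : ℝ) + 1))) ≤
      ∫⁻ w in Metric.ball (0:ℂ) ε, G1 w := by
    calc (∑' k : ℕ, ENNReal.ofReal (c / (((K + k : ℕ) : ℝ) + 1)))
        ≤ ∑' k : ℕ, ∫⁻ w in A k, G1 w := ENNReal.tsum_le_tsum hterm
      _ = ∫⁻ w in ⋃ k, A k, G1 w := (lintegral_iUnion hAmeas hAdisj _).symm
      _ ≤ ∫⁻ w in Metric.ball (0:ℂ) ε, G1 w :=
          lintegral_mono_set (Set.iUnion_subset hAsub)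
  rw [hsum] at hchain
  exact top_le_iff.1 hchain

-- product lemma
lemma pi_prod (H : ℂ → ℝ≥0∞) (hH : Measurable H) :
    ∀ n : ℕ, ∫⁻ z : Fin n → ℂ, ∏ i, H (z i) = (∫⁻ w : ℂ, H w) ^ n := by
  intro n
  induction n with
  | zero => rw [MeasureTheory.volume_pi]; simp [Measure.pi_univ]
  | succ n ih =>
    have hmp := measurePreserving_piFinSuccAbove (fun _ : Fin (n+1) => (volume : Measure ℂ)) 0
    have hPm : Measurable (fun y : Fin n → ℂ => ∏ j, H (y j)) :=
      Finset.measurable_prod _ fun j _ => hH.comp (measurable_pi_apply j)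
    have hg : Measurable (fun p : ℂ × (Fin n → ℂ) => H p.1 * ∏ j, H (p.2 j)) :=
      (hH.comp measurable_fst).mul (hPm.comp measurable_snd)
    calc ∫⁻ z : Fin (n+1) → ℂ, ∏ i, H (z i)
        = ∫⁻ z : Fin (n+1) → ℂ, H (z 0) * ∏ j : Fin n, H (z ((0 : Fin (n+1)).succAbove j)) := by
          congr 1; funext z; exact Fin.prod_univ_succAbove (fun i => H (z i)) 0
      _ = ∫⁻ z : Fin (n+1) → ℂ,
            (fun p : ℂ × (Fin n → ℂ) => H p.1 * ∏ j, H (p.2 j))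
              (MeasurableEquiv.piFinSuccAbove (fun _ => ℂ) 0 z) := rfl
      _ = ∫⁻ p : ℂ × (Fin n → ℂ), H p.1 * ∏ j, H (p.2 j)
            ∂((volume : Measure ℂ).prod (Measure.pi fun _ => volume)) := by
          rw [MeasureTheory.volume_pi]
          exact hmp.lintegral_comp hg
      _ = (∫⁻ w : ℂ, H w) * ∫⁻ y : Fin n → ℂ, ∏ j, H (y j) := by
          rw [← MeasureTheory.volume_pi]
          exact lintegral_prod_mul hH.aemeasurable hPm.aemeasurable
      _ = (∫⁻ w : ℂ, H w) ^ (n+1) := by rw [ih]; ring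

set_option maxHeartbeats 1000000 in
/-- Lemma 3.1(i), divergence at `s = 1`: the function
`z ↦ 1 / (|∏ i, ln |z_i|| · ∏ i, |z_i|²)` is not integrable on any small ball in `ℂⁿ`. -/
theorem stmt_1 (n : ℕ) (hn : 1 ≤ n) (ε : ℝ) (hε0 : 0 < ε) (hε1 : ε < 1) :
    ¬ IntegrableOn
      (fun z : Fin n → ℂ =>
        1 / (|∏ i, Real.log (‖z i‖)| * ∏ i, ‖z i‖ ^ 2))
      (Metric.ball 0 ε) := by
  intro h
  have hlt := h.lintegral_lt_top
  set B : Set ℂ := Metric.ball (0:ℂ) ε with hB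
  set H : ℂ → ℝ≥0∞ := B.indicator G1 with hH
  have hHmeas : Measurable H := G1_measurable.indicator Metric.isOpen_ball.measurableSet
  have hHint : ∫⁻ w : ℂ, H w = ⊤ := by
    rw [hH, lintegral_indicator Metric.isOpen_ball.measurableSet _]
    exact core ε hε0 hε1
  have hball : Metric.ball (0 : Fin n → ℂ) ε = Set.pi Set.univ fun _ => B := by
    rw [ball_pi _ hε0]
    rfl
  have hpoint : ∀ z : Fin n → ℂ,
      (Set.pi Set.univ fun _ : Fin n => B).indicator
        (fun z : Fin n → ℂ => ENNReal.ofReal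
          (1 / (|∏ i, Real.log (‖z i‖)| * ∏ i, ‖z i‖ ^ 2))) z
        = ∏ i, H (z i) := by
    intro z
    by_cases hz : z ∈ Set.pi Set.univ fun _ : Fin n => B
    · rw [Set.indicator_of_mem hz]
      have hrhs : ∏ i, H (z i) = ∏ i, G1 (z i) := by
        refine Finset.prod_congr rfl fun i _ => ?_
        rw [hH, Set.indicator_of_mem (hz i (Set.mem_univ i))]
      rw [hrhs]
      have hf : (1 : ℝ) / (|∏ i, Real.log (‖z i‖)| * ∏ i, ‖z i‖ ^ 2)
          = ∏ i, 1 / (|Real.log (‖z i‖)| * ‖z i‖ ^ 2) := by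
        rw [Finset.abs_prod, ← Finset.prod_mul_distrib]
        simp only [one_div, ← Finset.prod_inv_distrib]
      rw [hf]
      exact ENNReal.ofReal_prod_of_nonneg fun i _ => by positivity
    · rw [Set.indicator_of_notMem hz]
      rw [Set.mem_univ_pi] at hz
      push_neg at hz
      obtain ⟨i, hi⟩ := hz
      refine (Finset.prod_eq_zero (Finset.mem_univ i) ?_).symm
      rw [hH, Set.indicator_of_notMem hi]
  have htop : ∫⁻ z : Fin n → ℂ in Metric.ball 0 ε, ENNReal.ofReal
      (1 / (|∏ i, Real.log (‖z i‖)| * ∏ i, ‖z i‖ ^ 2)) = ⊤ := by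
    rw [hball, ← lintegral_indicator (MeasurableSet.univ_pi fun _ =>
      Metric.isOpen_ball.measurableSet) _]
    calc ∫⁻ z : Fin n → ℂ, (Set.pi Set.univ fun _ : Fin n => B).indicator
          (fun z : Fin n → ℂ => ENNReal.ofReal
            (1 / (|∏ i, Real.log (‖z i‖)| * ∏ i, ‖z i‖ ^ 2))) z
        = ∫⁻ z : Fin n → ℂ, ∏ i, H (z i) := by
          congr 1; funext z; exact hpoint z
      _ = (∫⁻ w : ℂ, H w) ^ n := pi_prod H hHmeas n
      _ = ⊤ := by rw [hHint]; exact ENNReal.top_pow (by omega)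
  rw [htop] at hlt
  exact (lt_irrefl _ hlt).elim
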